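/- Let X, Y : [0, T] → ℝ be continuous with X ≥ 0 and Y ≥ 0, let F, G : [0, T] → ℝ be nonnegative and nondecreasing, and suppose for all t ∈ [0, T]: X(t)² + ∫_0^t Y(s)² ds ≤ X(0)² + F(t)·max_{0≤s≤t} X(s) + G(t). Then for all t ∈ [0, T]: X(t) ≤ X(0) + F(t) + G(t)^{1/2}. -/
import Mathlib


theorem continuous_max_argument (T : ℝ) (hT : 0 < T) (X Y F G : ℝ → ℝ)
    (hXc : ContinuousOn X (Set.Icc 0 T)) (hYc : ContinuousOn Y (Set.Icc 0 T))
    (hX : ∀ t ∈ Set.Icc (0 : ℝ) T, 0 ≤ X t) (hY : ∀ t ∈ Set.Icc (0 : ℝ) T, 0 ≤ Y t)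
    (hF : ∀ t ∈ Set.Icc (0 : ℝ) T, 0 ≤ F t) (hG : ∀ t ∈ Set.Icc (0 : ℝ) T, 0 ≤ G t)
    (hFmono : ∀ s ∈ Set.Icc (0 : ℝ) T, ∀ t ∈ Set.Icc (0 : ℝ) T, s ≤ t → F s ≤ F t)
    (hGmono : ∀ s ∈ Set.Icc (0 : ℝ) T, ∀ t ∈ Set.Icc (0 : ℝ) T, s ≤ t → G s ≤ G t)
    (h : ∀ t ∈ Set.Icc (0 : ℝ) T,
      X t ^ 2 + ∫ s in (0 : ℝ)..t, Y s ^ 2 ≤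
        X 0 ^ 2 + F t * sSup (X '' Set.Icc 0 t) + G t) :
    ∀ t ∈ Set.Icc (0 : ℝ) T, X t ≤ X 0 + F t + Real.sqrt (G t) := by
  intro t ht
  obtain ⟨ht0, htT⟩ := ht
  have hsub : Set.Icc (0 : ℝ) t ⊆ Set.Icc 0 T := Set.Icc_subset_Icc le_rfl htT
  have hne : (Set.Icc (0 : ℝ) t).Nonempty := Set.nonempty_Icc.2 ht0
  -- max of X on [0,t]
  obtain ⟨u, hu, hmax⟩ := (isCompact_Icc).exists_isMaxOn hne (hXc.mono hsub)
  have huT : u ∈ Set.Icc (0 : ℝ) T := hsub hu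
  have hut : u ≤ t := hu.2
  have hu0 : 0 ≤ u := hu.1
  -- the key inequality at u
  have hineq := h u huT
  have hint : 0 ≤ ∫ s in (0:ℝ)..u, Y s ^ 2 := by
    apply intervalIntegral.integral_nonneg hu0
    intro s hs
    positivity
  have hsup : sSup (X '' Set.Icc 0 u) ≤ X u := by
    apply csSup_le (Set.Nonempty.image _ (Set.nonempty_Icc.2 hu0))
    rintro _ ⟨s, hs, rfl⟩
    exact hmax (Set.Icc_subset_Icc le_rfl hut hs)
  have hXu : 0 ≤ X u := hX u huT
  have hFu : 0 ≤ F u := hF u huT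
  have hFt : 0 ≤ F t := hF t ⟨ht0, htT⟩
  have hFut : F u ≤ F t := hFmono u huT t ⟨ht0, htT⟩ hut
  have hGut : G u ≤ G t := hGmono u huT t ⟨ht0, htT⟩ hut
  have hX0 : 0 ≤ X 0 := hX 0 ⟨le_rfl, le_of_lt hT⟩
  have hXtu : X t ≤ X u := hmax ⟨ht0, le_rfl⟩
  have hq : X u ^ 2 ≤ X 0 ^ 2 + F t * X u + G t := by
    have h1 : F u * sSup (X '' Set.Icc 0 u) ≤ F u * X u :=
      mul_le_mul_of_nonneg_left hsup hFu
    have h2 : F u * X u ≤ F t * X u := mul_le_mul_of_nonneg_right hFut hXu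
    nlinarith
  set s := Real.sqrt (G t) with hs
  have hs0 : 0 ≤ s := Real.sqrt_nonneg _
  have hs2 : s ^ 2 = G t := Real.sq_sqrt (hG t ⟨ht0, htT⟩)
  -- solve quadratic: X u ≤ X 0 + F t + s
  have hu_le : X u ≤ X 0 + F t + s := by
    by_contra hcon
    push_neg at hcon
    have h1 : X 0 < X u := by linarith
    have h2 : s < X u := by linarith
    nlinarith
  linarith
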